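/- Let G₁ and G₂ be Γ-labeled graphs with |V(G₁) ∩ V(G₂)| ≥ 2. If G₁ is periodically rigid (r₂(E₁) = 2|V₁| − 2) and G₂ is rigid and balanced (r₂(E₂) = 2|V₂| − 3), then G₁ ∪ G₂ is periodically rigid: r₂(E₁ ∪ E₂) = 2|V₁ ∪ V₂| − 2. -/

import Mathlib

open Finset

/-- The set of vertices incident to an edge set `F`. -/
def labVerts {V ε : Type*} [DecidableEq V] [DecidableEq ε]
    (head tail : ε → V) (F : Finset ε) : Finset V :=
  F.image head ∪ F.image tail

/-- An edge set `F` of a `Γ`-labeled graph is balanced if the label of every closed walk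
in `F` is the identity; equivalently, the labels on `F` come from a potential `θ`. -/
def IsBalanced {V ε Γ : Type*} [AddCommGroup Γ]
    (head tail : ε → V) (ψ : ε → Γ) (F : Finset ε) : Prop :=
  ∃ θ : V → Γ, ∀ e ∈ F, ψ e = θ (head e) - θ (tail e)

/-- Independence in the periodic count matroid `R₂(V,Γ)`:
every nonempty subset `F'` satisfies `|F'| ≤ 2|V(F')| − 2`, and every nonempty balanced
subset `F'` satisfies `|F'| ≤ 2|V(F')| − 3`. -/
def CountIndep {V ε Γ : Type*} [DecidableEq V] [DecidableEq ε] [AddCommGroup Γ]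
    (head tail : ε → V) (ψ : ε → Γ) (F : Finset ε) : Prop :=
  (∀ F' ⊆ F, F'.Nonempty → F'.card ≤ 2 * (labVerts head tail F').card - 2) ∧
  (∀ F' ⊆ F, F'.Nonempty → IsBalanced head tail ψ F' →
    F'.card ≤ 2 * (labVerts head tail F').card - 3)

/-- The rank function `r₂` of the periodic count matroid: the maximum cardinality of an
independent subset of `E`. -/
noncomputable def rank2 {V ε Γ : Type*} [DecidableEq V] [DecidableEq ε] [AddCommGroup Γ]
    (head tail : ε → V) (ψ : ε → Γ) (E : Finset ε) : ℕ := by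
  classical
  exact (E.powerset.filter (CountIndep head tail ψ)).sup Finset.card

section Helpers

variable {V ε Γ : Type*} [DecidableEq V] [DecidableEq ε] [AddCommGroup Γ]
  (head tail : ε → V) (ψ : ε → Γ)

lemma labVerts_mono {F G : Finset ε} (h : F ⊆ G) :
    labVerts head tail F ⊆ labVerts head tail G :=
  union_subset_union (image_subset_image h) (image_subset_image h)

lemma head_mem_labVerts {F : Finset ε} {e : ε} (he : e ∈ F) :
    head e ∈ labVerts head tail F := mem_union_left _ (mem_image_of_mem _ he)

lemma tail_mem_labVerts {F : Finset ε} {e : ε} (he : e ∈ F) :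
    tail e ∈ labVerts head tail F := mem_union_right _ (mem_image_of_mem _ he)

lemma mem_labVerts {F : Finset ε} {x : V} (hx : x ∈ labVerts head tail F) :
    ∃ e ∈ F, x = head e ∨ x = tail e := by
  unfold labVerts at hx
  rcases mem_union.mp hx with h | h <;> obtain ⟨e, he, rfl⟩ := mem_image.mp h
  · exact ⟨e, he, Or.inl rfl⟩
  · exact ⟨e, he, Or.inr rfl⟩

lemma labVerts_singleton (e : ε) :
    labVerts head tail {e} = {head e, tail e} := by
  unfold labVerts
  rw [image_singleton, image_singleton, insert_eq]

lemma labVerts_union (F G : Finset ε) :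
    labVerts head tail (F ∪ G) = labVerts head tail F ∪ labVerts head tail G := by
  unfold labVerts
  rw [image_union, image_union]
  ext x
  simp only [mem_union]
  tauto

lemma isBalanced_subset {F G : Finset ε} (h : IsBalanced head tail ψ F) (hGF : G ⊆ F) :
    IsBalanced head tail ψ G := by
  obtain ⟨θ, hθ⟩ := h
  exact ⟨θ, fun e he => hθ e (hGF he)⟩

lemma countIndep_empty : CountIndep head tail ψ (∅ : Finset ε) := by
  constructor <;> intro F' hsub hne <;>
    simp [subset_empty.mp hsub] at hne

lemma nonloop {F : Finset ε} (hF : CountIndep head tail ψ F) {e : ε} (he : e ∈ F) :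
    head e ≠ tail e := by
  intro heq
  have h1 := hF.1 {e} (singleton_subset_iff.mpr he) (singleton_nonempty e)
  rw [labVerts_singleton] at h1
  simp [heq] at h1

lemma two_le_card_labVerts {F G : Finset ε} (hF : CountIndep head tail ψ F)
    (hG : G ⊆ F) (hne : G.Nonempty) : 2 ≤ (labVerts head tail G).card := by
  obtain ⟨e, he⟩ := hne
  have hne' := nonloop head tail ψ hF (hG he)
  have hsub : ({head e, tail e} : Finset V) ⊆ labVerts head tail G := by
    intro x hx
    rcases mem_insert.mp hx with h | h
    · exact h ▸ head_mem_labVerts head tail he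
    · exact (mem_singleton.mp h) ▸ tail_mem_labVerts head tail he
  calc 2 = ({head e, tail e} : Finset V).card := (card_pair hne').symm
    _ ≤ _ := card_le_card hsub

/-- The union of a `(2,2)`-tight set with a `(2,2)`-tight or balanced `(2,3)`-tight set
sharing an edge is again `(2,2)`-tight. -/
lemma union_tight2 {F T W : Finset ε} (hF : CountIndep head tail ψ F)
    (hTF : T ⊆ F) (hWF : W ⊆ F)
    (hT : T.card + 2 = 2 * (labVerts head tail T).card)
    (hWcase : W.card + 2 = 2 * (labVerts head tail W).card ∨
      (IsBalanced head tail ψ W ∧ W.card + 3 = 2 * (labVerts head tail W).card))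
    (hmeet : (T ∩ W).Nonempty) :
    (T ∪ W).card + 2 = 2 * (labVerts head tail (T ∪ W)).card := by
  have hUF : T ∪ W ⊆ F := union_subset hTF hWF
  have hIF : T ∩ W ⊆ F := fun x hx => hTF (mem_of_mem_inter_left hx)
  have hI2 : 2 ≤ (labVerts head tail (T ∩ W)).card :=
    two_le_card_labVerts head tail ψ hF hIF hmeet
  have hIsub : labVerts head tail (T ∩ W) ⊆
      labVerts head tail T ∩ labVerts head tail W :=
    subset_inter (labVerts_mono head tail inter_subset_left)
      (labVerts_mono head tail inter_subset_right)
  have hIcard : (labVerts head tail (T ∩ W)).card ≤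
      (labVerts head tail T ∩ labVerts head tail W).card := card_le_card hIsub
  have hlvU := labVerts_union head tail T W
  have hb1 : (labVerts head tail T ∩ labVerts head tail W).card ≤ (labVerts head tail T).card :=
    card_le_card inter_subset_left
  have hb2 : (labVerts head tail T ∩ labVerts head tail W).card ≤ (labVerts head tail W).card :=
    card_le_card inter_subset_right
  have hvu := card_union_add_card_inter (labVerts head tail T) (labVerts head tail W)
  have hcu := card_union_add_card_inter T W
  have hUne : (T ∪ W).Nonempty := hmeet.mono (fun x hx => mem_union_left _ (mem_of_mem_inter_left hx))
  have hupper := hF.1 (T ∪ W) hUF hUne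
  rw [hlvU]
  rw [hlvU] at hupper
  rcases hWcase with hW | ⟨hWbal, hW⟩
  · have hIbound := hF.1 (T ∩ W) hIF hmeet
    omega
  · have hIbal : IsBalanced head tail ψ (T ∩ W) :=
      isBalanced_subset head tail ψ hWbal inter_subset_right
    have hIbound := hF.2 (T ∩ W) hIF hmeet hIbal
    omega

lemma le_rank2 {E F : Finset ε} (hFE : F ⊆ E) (hF : CountIndep head tail ψ F) :
    F.card ≤ rank2 head tail ψ E := by
  classical
  unfold rank2
  exact Finset.le_sup (mem_filter.mpr ⟨mem_powerset.mpr hFE, hF⟩)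

lemma exists_rank2_witness (E : Finset ε) :
    ∃ F, F ⊆ E ∧ CountIndep head tail ψ F ∧ F.card = rank2 head tail ψ E := by
  classical
  unfold rank2
  obtain ⟨F, hF, heq⟩ := Finset.exists_mem_eq_sup
    (E.powerset.filter (CountIndep head tail ψ))
    ⟨∅, mem_filter.mpr ⟨mem_powerset.mpr (empty_subset E), countIndep_empty head tail ψ⟩⟩
    Finset.card
  obtain ⟨h1, h2⟩ := mem_filter.mp hF
  exact ⟨F, mem_powerset.mp h1, h2, heq.symm⟩

lemma rank2_le {E : Finset ε} {n : ℕ} (hn : (labVerts head tail E).card ≤ n) :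
    rank2 head tail ψ E ≤ 2 * n - 2 := by
  classical
  unfold rank2
  apply Finset.sup_le
  intro G hG
  obtain ⟨h1, h2⟩ := mem_filter.mp hG
  rcases G.eq_empty_or_nonempty with rfl | hne
  · simp
  · have := h2.1 G subset_rfl hne
    have hmono : (labVerts head tail G).card ≤ n :=
      le_trans (card_le_card (labVerts_mono head tail (mem_powerset.mp h1))) hn
    omega

end Helpers

/-- Lemma cl:G_1cupG_2rigid2 (i). If `G₁` is periodically rigid, `G₂`
is rigid and balanced, and they share at least two vertices, then `G₁ ∪ G₂` is
periodically rigid: `r₂(E₁ ∪ E₂) = 2|V₁ ∪ V₂| − 2`. -/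
theorem union_periodically_rigid_of_rigid
    {V ε Γ : Type*} [DecidableEq V] [DecidableEq ε] [AddCommGroup Γ]
    (head tail : ε → V) (ψ : ε → Γ) (E₁ E₂ : Finset ε)
    (hbal2 : IsBalanced head tail ψ E₂)
    (hshare : 2 ≤ (labVerts head tail E₁ ∩ labVerts head tail E₂).card)
    (hr1 : rank2 head tail ψ E₁ = 2 * (labVerts head tail E₁).card - 2)
    (hr2 : rank2 head tail ψ E₂ = 2 * (labVerts head tail E₂).card - 3) :
    rank2 head tail ψ (E₁ ∪ E₂) = 2 * (labVerts head tail (E₁ ∪ E₂)).card - 2 := by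
  classical
  have hn1 : 2 ≤ (labVerts head tail E₁).card :=
    le_trans hshare (card_le_card inter_subset_left)
  have hn2 : 2 ≤ (labVerts head tail E₂).card :=
    le_trans hshare (card_le_card inter_subset_right)
  -- extract a maximum independent subset of E₁
  obtain ⟨F₁, hF₁E, hF₁i, hF₁r⟩ := exists_rank2_witness head tail ψ E₁
  have hF₁c : F₁.card + 2 = 2 * (labVerts head tail E₁).card := by
    rw [hF₁r, hr1]; omega
  have hF₁ne : F₁.Nonempty := card_pos.mp (by omega)
  have hlvF₁ : labVerts head tail F₁ = labVerts head tail E₁ := by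
    apply eq_of_subset_of_card_le (labVerts_mono head tail hF₁E)
    have h := hF₁i.1 F₁ subset_rfl hF₁ne
    omega
  -- extract a maximum independent subset of E₂
  obtain ⟨F₂, hF₂E, hF₂i, hF₂r⟩ := exists_rank2_witness head tail ψ E₂
  have hF₂bal : IsBalanced head tail ψ F₂ := isBalanced_subset head tail ψ hbal2 hF₂E
  have hF₂c : F₂.card + 3 = 2 * (labVerts head tail E₂).card := by
    rw [hF₂r, hr2]; omega
  have hF₂ne : F₂.Nonempty := card_pos.mp (by omega)
  have hlvF₂ : labVerts head tail F₂ = labVerts head tail E₂ := by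
    apply eq_of_subset_of_card_le (labVerts_mono head tail hF₂E)
    have h := hF₂i.2 F₂ subset_rfl hF₂ne hF₂bal
    omega
  -- a maximal independent set F with F₁ ⊆ F ⊆ F₁ ∪ F₂
  set 𝒢 := (F₁ ∪ F₂).powerset.filter
    (fun G => F₁ ⊆ G ∧ CountIndep head tail ψ G) with h𝒢
  have h𝒢ne : 𝒢.Nonempty :=
    ⟨F₁, mem_filter.mpr ⟨mem_powerset.mpr subset_union_left, subset_rfl, hF₁i⟩⟩
  obtain ⟨F, hFmem, hFsup⟩ := Finset.exists_mem_eq_sup 𝒢 h𝒢ne Finset.card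
  obtain ⟨hFsub', hF₁F, hFi⟩ :
      F ⊆ F₁ ∪ F₂ ∧ F₁ ⊆ F ∧ CountIndep head tail ψ F := by
    have h := mem_filter.mp hFmem
    exact ⟨mem_powerset.mp h.1, h.2.1, h.2.2⟩
  have hmax : ∀ e ∈ F₂, e ∉ F → ¬ CountIndep head tail ψ (insert e F) := by
    intro e he heF hind
    have hmem : insert e F ∈ 𝒢 := mem_filter.mpr
      ⟨mem_powerset.mpr (insert_subset (mem_union_right _ he) hFsub'),
       hF₁F.trans (subset_insert _ _), hind⟩
    have hle : (insert e F).card ≤ F.card := hFsup ▸ Finset.le_sup (f := Finset.card) hmem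
    rw [card_insert_of_notMem heF] at hle
    omega
  -- every non-addable edge has a tight witness inside F containing its endpoints
  have hwit : ∀ e ∈ F₂, e ∉ F → ∃ W, W ⊆ F ∧ W.Nonempty ∧
      head e ∈ labVerts head tail W ∧ tail e ∈ labVerts head tail W ∧
      (W.card + 2 = 2 * (labVerts head tail W).card ∨
        (IsBalanced head tail ψ W ∧ W.card + 3 = 2 * (labVerts head tail W).card)) := by
    intro e he heF
    have hnl : head e ≠ tail e := nonloop head tail ψ hF₂i he
    have hlve : labVerts head tail {e} = {head e, tail e} := labVerts_singleton head tail e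
    have hind := hmax e he heF
    unfold CountIndep at hind
    rw [not_and_or] at hind
    rcases hind with hind | hind
    · push_neg at hind
      obtain ⟨F'', hsub, hne, hviol⟩ := hind
      have heF'' : e ∈ F'' := by
        by_contra h
        have hFF : F'' ⊆ F := fun x hx =>
          (mem_insert.mp (hsub hx)).resolve_left (fun hh => h (hh ▸ hx))
        have := hF₁i.1
        exact absurd (hFi.1 F'' hFF hne) (by omega)
      set W := F''.erase e with hWdef
      have hWF : W ⊆ F := by
        intro x hx
        obtain ⟨hxe, hxF''⟩ := mem_erase.mp hx
        exact (mem_insert.mp (hsub hxF'')).resolve_left hxe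
      have hcard : W.card + 1 = F''.card := card_erase_add_one heF''
      have hWne : W.Nonempty := by
        rw [nonempty_iff_ne_empty]
        intro hemp
        rw [hWdef] at hemp
        rcases (erase_eq_empty_iff F'' e).mp hemp with h | h
        · exact hne.ne_empty h
        · rw [h, hlve, card_pair hnl, card_singleton] at hviol
          omega
      have hW2 : 2 ≤ (labVerts head tail W).card :=
        two_le_card_labVerts head tail ψ hFi hWF hWne
      have hWb := hFi.1 W hWF hWne
      have hcardv : (labVerts head tail W).card ≤ (labVerts head tail F'').card :=
        card_le_card (labVerts_mono head tail (erase_subset e F''))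
      have hveq : labVerts head tail W = labVerts head tail F'' :=
        eq_of_subset_of_card_le (labVerts_mono head tail (erase_subset e F'')) (by omega)
      refine ⟨W, hWF, hWne, ?_, ?_, Or.inl (by omega)⟩
      · rw [hveq]; exact head_mem_labVerts head tail heF''
      · rw [hveq]; exact tail_mem_labVerts head tail heF''
    · push_neg at hind
      obtain ⟨F'', hsub, hne, hbal, hviol⟩ := hind
      have heF'' : e ∈ F'' := by
        by_contra h
        have hFF : F'' ⊆ F := fun x hx =>
          (mem_insert.mp (hsub hx)).resolve_left (fun hh => h (hh ▸ hx))
        exact absurd (hFi.2 F'' hFF hne hbal) (by omega)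
      set W := F''.erase e with hWdef
      have hWF : W ⊆ F := by
        intro x hx
        obtain ⟨hxe, hxF''⟩ := mem_erase.mp hx
        exact (mem_insert.mp (hsub hxF'')).resolve_left hxe
      have hcard : W.card + 1 = F''.card := card_erase_add_one heF''
      have hWne : W.Nonempty := by
        rw [nonempty_iff_ne_empty]
        intro hemp
        rw [hWdef] at hemp
        rcases (erase_eq_empty_iff F'' e).mp hemp with h | h
        · exact hne.ne_empty h
        · rw [h, hlve, card_pair hnl, card_singleton] at hviol
          omega
      have hWbal : IsBalanced head tail ψ W :=
        isBalanced_subset head tail ψ hbal (erase_subset e F'')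
      have hW2 : 2 ≤ (labVerts head tail W).card :=
        two_le_card_labVerts head tail ψ hFi hWF hWne
      have hWb := hFi.2 W hWF hWne hWbal
      have hcardv : (labVerts head tail W).card ≤ (labVerts head tail F'').card :=
        card_le_card (labVerts_mono head tail (erase_subset e F''))
      have hveq : labVerts head tail W = labVerts head tail F'' :=
        eq_of_subset_of_card_le (labVerts_mono head tail (erase_subset e F'')) (by omega)
      refine ⟨W, hWF, hWne, ?_, ?_, Or.inr ⟨hWbal, by omega⟩⟩
      · rw [hveq]; exact head_mem_labVerts head tail heF''
      · rw [hveq]; exact tail_mem_labVerts head tail heF''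
  -- the maximal (2,2)-tight set T containing F₁
  set 𝒯 := F.powerset.filter
    (fun T => F₁ ⊆ T ∧ T.card + 2 = 2 * (labVerts head tail T).card) with h𝒯
  have h𝒯ne : 𝒯.Nonempty :=
    ⟨F₁, mem_filter.mpr ⟨mem_powerset.mpr hF₁F, subset_rfl, by rw [hlvF₁]; exact hF₁c⟩⟩
  obtain ⟨T, hTmem, hTsup⟩ := Finset.exists_mem_eq_sup 𝒯 h𝒯ne Finset.card
  obtain ⟨hTF, hF₁T, hTt⟩ :
      T ⊆ F ∧ F₁ ⊆ T ∧ T.card + 2 = 2 * (labVerts head tail T).card := by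
    have h := mem_filter.mp hTmem
    exact ⟨mem_powerset.mp h.1, h.2.1, h.2.2⟩
  -- absorption of tight sets sharing an edge with T
  have habs : ∀ W, W ⊆ F → W.Nonempty →
      (W.card + 2 = 2 * (labVerts head tail W).card ∨
        (IsBalanced head tail ψ W ∧ W.card + 3 = 2 * (labVerts head tail W).card)) →
      (T ∩ W).Nonempty → W ⊆ T := by
    intro W hWF hWne hWt hmeet
    have hu := union_tight2 head tail ψ hFi hTF hWF hTt hWt hmeet
    have hmem : T ∪ W ∈ 𝒯 := mem_filter.mpr
      ⟨mem_powerset.mpr (union_subset hTF hWF), hF₁T.trans subset_union_left, hu⟩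
    have hle : (T ∪ W).card ≤ T.card := hTsup ▸ Finset.le_sup (f := Finset.card) hmem
    have heq : T = T ∪ W := eq_of_subset_of_card_le subset_union_left hle
    intro x hx
    rw [heq]
    exact mem_union_right _ hx
  -- endpoints of non-edges of F lying in F₂ are spanned by T
  have hends : ∀ e ∈ F₂, e ∉ F →
      head e ∈ labVerts head tail T ∧ tail e ∈ labVerts head tail T := by
    intro e he heF
    obtain ⟨W, hWF, hWne, hh, ht, hWt⟩ := hwit e he heF
    have hWT : W ⊆ T := by
      apply habs W hWF hWne hWt
      by_contra hmeet
      have hWF₂ : W ⊆ F₂ := by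
        intro x hx
        rcases mem_union.mp (hFsub' (hWF hx)) with h | h
        · exact absurd ⟨x, mem_inter.mpr ⟨hF₁T h, hx⟩⟩ hmeet
        · exact h
      have h2 := two_le_card_labVerts head tail ψ hFi hWF hWne
      rcases hWt with hWt | ⟨hWbal', hWt⟩
      · have hbalW : IsBalanced head tail ψ W := isBalanced_subset head tail ψ hF₂bal hWF₂
        have hc := hF₂i.2 W hWF₂ hWne hbalW
        omega
      · have heW : e ∉ W := fun h => heF (hWF h)
        have hsub2 : insert e W ⊆ F₂ := insert_subset he hWF₂
        have hlv : labVerts head tail (insert e W) = labVerts head tail W := by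
          apply Finset.Subset.antisymm
          · intro x hx
            obtain ⟨f, hf, hor⟩ := mem_labVerts head tail hx
            rcases mem_insert.mp hf with rfl | hf'
            · rcases hor with rfl | rfl
              · exact hh
              · exact ht
            · rcases hor with rfl | rfl
              · exact head_mem_labVerts head tail hf'
              · exact tail_mem_labVerts head tail hf'
          · exact labVerts_mono head tail (subset_insert e W)
        have hbal' : IsBalanced head tail ψ (insert e W) :=
          isBalanced_subset head tail ψ hF₂bal hsub2
        have hcount := hF₂i.2 (insert e W) hsub2 (insert_nonempty e W) hbal'
        rw [hlv, card_insert_of_notMem heW] at hcount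
        omega
    exact ⟨(labVerts_mono head tail hWT) hh, (labVerts_mono head tail hWT) ht⟩
  -- counting: K := F \ T
  have hKF₂ : F \ T ⊆ F₂ := by
    intro x hx
    obtain ⟨hxF, hxT⟩ := mem_sdiff.mp hx
    rcases mem_union.mp (hFsub' hxF) with h | h
    · exact absurd (hF₁T h) hxT
    · exact h
  have hsplit : (F₂ \ (F \ T)).card + (F \ T).card = F₂.card :=
    card_sdiff_add_card_eq_card hKF₂
  have hFsplit : (F \ T).card + T.card = F.card := card_sdiff_add_card_eq_card hTF
  have hlvrest : labVerts head tail (F₂ \ (F \ T)) ⊆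
      labVerts head tail E₂ ∩ labVerts head tail T := by
    intro x hx
    obtain ⟨e, heIn, hor⟩ := mem_labVerts head tail hx
    obtain ⟨heF₂, heK⟩ := mem_sdiff.mp heIn
    have hx2 : x ∈ labVerts head tail E₂ := by
      rw [← hlvF₂]
      rcases hor with rfl | rfl
      · exact head_mem_labVerts head tail heF₂
      · exact tail_mem_labVerts head tail heF₂
    have hxS : x ∈ labVerts head tail T := by
      by_cases heF : e ∈ F
      · have heT : e ∈ T := by
          by_contra h
          exact heK (mem_sdiff.mpr ⟨heF, h⟩)
        rcases hor with rfl | rfl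
        · exact head_mem_labVerts head tail heT
        · exact tail_mem_labVerts head tail heT
      · obtain ⟨h1, h2⟩ := hends e heF₂ heF
        rcases hor with rfl | rfl
        · exact h1
        · exact h2
    exact mem_inter.mpr ⟨hx2, hxS⟩
  have hV₁S : labVerts head tail E₁ ⊆ labVerts head tail T := by
    rw [← hlvF₁]; exact labVerts_mono head tail hF₁T
  have hp2 : 2 ≤ (labVerts head tail E₂ ∩ labVerts head tail T).card := by
    refine le_trans hshare (card_le_card ?_)
    intro x hx
    obtain ⟨h1, h2⟩ := mem_inter.mp hx
    exact mem_inter.mpr ⟨h2, hV₁S h1⟩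
  have hple : (labVerts head tail E₂ ∩ labVerts head tail T).card ≤
      (labVerts head tail E₂).card := card_le_card inter_subset_left
  have hK : 2 * (labVerts head tail E₂).card ≤
      (F \ T).card + 2 * (labVerts head tail E₂ ∩ labVerts head tail T).card := by
    rcases (F₂ \ (F \ T)).eq_empty_or_nonempty with hemp | hne'
    · rw [hemp, card_empty] at hsplit
      omega
    · have hb := hF₂i.2 (F₂ \ (F \ T)) sdiff_subset hne'
        (isBalanced_subset head tail ψ hF₂bal sdiff_subset)
      have hc := card_le_card hlvrest
      have hpos := card_pos.mpr hne'
      omega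
  -- final count
  have hub : rank2 head tail ψ (E₁ ∪ E₂) ≤ 2 * (labVerts head tail (E₁ ∪ E₂)).card - 2 :=
    rank2_le head tail ψ le_rfl
  have hFE : F ⊆ E₁ ∪ E₂ := hFsub'.trans (union_subset_union hF₁E hF₂E)
  have hlb : F.card ≤ rank2 head tail ψ (E₁ ∪ E₂) := le_rank2 head tail ψ hFE hFi
  have hVU : labVerts head tail (E₁ ∪ E₂) = labVerts head tail E₁ ∪ labVerts head tail E₂ :=
    labVerts_union head tail E₁ E₂
  have hVbound : (labVerts head tail (E₁ ∪ E₂)).card +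
      (labVerts head tail E₂ ∩ labVerts head tail T).card ≤
      (labVerts head tail T).card + (labVerts head tail E₂).card := by
    have h1 : labVerts head tail (E₁ ∪ E₂) ⊆ labVerts head tail T ∪ labVerts head tail E₂ := by
      rw [hVU]
      exact union_subset (hV₁S.trans subset_union_left) subset_union_right
    have h2 := card_union_add_card_inter (labVerts head tail T) (labVerts head tail E₂)
    have h3 := card_le_card h1
    have h4 : (labVerts head tail T ∩ labVerts head tail E₂).card
        = (labVerts head tail E₂ ∩ labVerts head tail T).card := by rw [inter_comm]
    omega
  have hNbig : 2 ≤ (labVerts head tail (E₁ ∪ E₂)).card :=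
    le_trans hn1 (card_le_card (by rw [hVU]; exact subset_union_left))
  omega
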